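/- Let W be a bipartite graph with bipartition (V₁, V₀) and vertex weights 1 on V₁ and 0 on V₀, let ε ≥ 0, and let Q be a u–v path in W satisfying ℓ(Q) ≤ (1+ε)·ℓ_W(u,v). Then c(Q) ≤ (1+ε)·d_W(u,v). That is, in a map-weighted graph, a path that is a (1+ε)-approximate shortest path with respect to the number of edges is also a (1+ε)-approximate shortest path with respect to total vertex weight. -/
import Mathlib


/-- The cost of a walk: the sum of the vertex weights over its support
(including both endpoints). -/
def walkCost {V : Type*} {G : SimpleGraph V} (w : V → ℕ) {u v : V}
    (p : G.Walk u v) : ℕ :=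
  (p.support.map w).sum

/-- `ℓ_W(u,v)`: the minimum number of edges of a `u`–`v` path in `G`. -/
noncomputable def edgeDist {V : Type*} (G : SimpleGraph V) (u v : V) : ℕ :=
  sInf {n : ℕ | ∃ p : G.Walk u v, p.IsPath ∧ p.length = n}

/-- `d_W(u,v)`: the minimum total vertex weight of a `u`–`v` path in `G`
(weights of both endpoints included). -/
noncomputable def weightDist {V : Type*} (G : SimpleGraph V) (w : V → ℕ)
    (u v : V) : ℕ :=
  sInf {n : ℕ | ∃ p : G.Walk u v, p.IsPath ∧ walkCost w p = n}

/-- In a bipartite graph with 0/1 weights, twice the cost of any walk equals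
its length plus the weights of the endpoints. -/
lemma two_mul_walkCost {V : Type*} {G : SimpleGraph V} (V₁ : Set V)
    (hbip : ∀ x y, G.Adj x y → (x ∈ V₁ ↔ y ∉ V₁))
    (w : V → ℕ) (hw1 : ∀ x ∈ V₁, w x = 1) (hw0 : ∀ x ∉ V₁, w x = 0)
    {u v : V} (p : G.Walk u v) :
    2 * walkCost w p = p.length + w u + w v := by
  induction p with
  | nil => simp [walkCost]; ring
  | @cons a b c h q ih =>
    have hsum : w a + w b = 1 := by
      by_cases ha : a ∈ V₁
      · rw [hw1 a ha, hw0 b ((hbip a b h).mp ha)]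
      · have hb : b ∈ V₁ := by
          by_contra hb
          exact ha ((hbip a b h).mpr hb)
        rw [hw0 a ha, hw1 b hb]
    have hc : walkCost w (SimpleGraph.Walk.cons h q) = w a + walkCost w q := by
      simp [walkCost, SimpleGraph.Walk.support_cons]
    rw [hc, SimpleGraph.Walk.length_cons]
    omega

/-- In a map-weighted (bipartite, 0/1 node-weighted) graph,
a path that is a `(1+ε)`-approximate shortest path with respect to the
number of edges is also a `(1+ε)`-approximate shortest path with respect
to total vertex weight. -/
theorem approx_shortest_length_to_approx_shortest_cost
    {V : Type*} (G : SimpleGraph V) (V₁ : Set V)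
    (hbip : ∀ x y, G.Adj x y → (x ∈ V₁ ↔ y ∉ V₁))
    (w : V → ℕ) (hw1 : ∀ x ∈ V₁, w x = 1) (hw0 : ∀ x ∉ V₁, w x = 0)
    (ε : ℝ) (hε : 0 ≤ ε)
    {u v : V} (Q : G.Walk u v) (hQ : Q.IsPath)
    (hshort : (Q.length : ℝ) ≤ (1 + ε) * (edgeDist G u v : ℝ)) :
    (walkCost w Q : ℝ) ≤ (1 + ε) * (weightDist G w u v : ℝ) := by
  have key : ∀ {a b : V} (p : G.Walk a b), 2 * walkCost w p = p.length + w a + w b :=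
    fun p => two_mul_walkCost V₁ hbip w hw1 hw0 p
  -- minimal-length path P
  have hne : {n : ℕ | ∃ p : G.Walk u v, p.IsPath ∧ p.length = n}.Nonempty :=
    ⟨Q.length, Q, hQ, rfl⟩
  obtain ⟨P, hP, hPl⟩ : edgeDist G u v ∈
      {n : ℕ | ∃ p : G.Walk u v, p.IsPath ∧ p.length = n} := Nat.sInf_mem hne
  -- weightDist equals cost of P
  have hD : weightDist G w u v = walkCost w P := by
    apply le_antisymm
    · exact Nat.sInf_le ⟨P, hP, rfl⟩
    · have hne2 : {n : ℕ | ∃ p : G.Walk u v, p.IsPath ∧ walkCost w p = n}.Nonempty :=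
        ⟨walkCost w P, P, hP, rfl⟩
      unfold weightDist
      apply le_csInf hne2
      rintro n ⟨p, hp, rfl⟩
      have h1 := key p
      have h2 := key P
      have hle : edgeDist G u v ≤ p.length := Nat.sInf_le ⟨p, hp, rfl⟩
      omega
  have h2D : 2 * weightDist G w u v = edgeDist G u v + w u + w v := by
    rw [hD, key P, hPl]
  have h2Q : 2 * walkCost w Q = Q.length + w u + w v := key Q
  have hk : (0:ℝ) ≤ (w u + w v : ℕ) := by positivity
  have h2D' : (2:ℝ) * (weightDist G w u v : ℝ)
      = (edgeDist G u v : ℝ) + ((w u + w v : ℕ) : ℝ) := by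
    have := congrArg (Nat.cast : ℕ → ℝ) h2D
    push_cast at this ⊢
    linarith
  have h2Q' : (2:ℝ) * (walkCost w Q : ℝ)
      = (Q.length : ℝ) + ((w u + w v : ℕ) : ℝ) := by
    push_cast
    have := congrArg (Nat.cast : ℕ → ℝ) h2Q
    push_cast at this
    linarith
  nlinarith [hshort, hε, hk, (Nat.cast_nonneg (edgeDist G u v) : (0:ℝ) ≤ _)]
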